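/- arXiv:1509.08456 — 3 statements merged into one kernel-verified Lean document; each statement's English description precedes it below -/
import Mathlib

section
/- For every set function w with w(∅)=0 there exists a partition P of N such that the associated hard clustering p ∈ Δ_N (defined by p_i^A = 1 for all A ∈ P and i ∈ A) satisfies W(p) = Σ_{A∈P} w(A) and W(p) ≥ W(q) for all q ∈ Δ_N. -/
open Finset

/-- Möbius inversion of a set function `w` on subsets of `N = Fin n`:
`μ^w(A) = ∑_{B ⊆ A} (−1)^{|A\B|} w(B)`. -/
def moebiusInv (n : ℕ) (w : Finset (Fin n) → ℝ) (A : Finset (Fin n)) : ℝ :=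
  ∑ B ∈ A.powerset, (-1 : ℝ) ^ (A \ B).card * w B

/-- Multilinear extension of `w`: `f^w(x) = ∑_{B ⊆ N} (∏_{i ∈ B} x_i) μ^w(B)`. -/
def mle (n : ℕ) (w : Finset (Fin n) → ℝ) (x : Fin n → ℝ) : ℝ :=
  ∑ B ∈ (univ : Finset (Fin n)).powerset, (∏ i ∈ B, x i) * moebiusInv n w B

/-- `q ∈ Δ_N`: `q i A` is the membership of data point `i` on subset `A`. -/
def IsMembership (n : ℕ) (q : Fin n → Finset (Fin n) → ℝ) : Prop :=
  (∀ i A, 0 ≤ q i A) ∧ (∀ i A, i ∉ A → q i A = 0) ∧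
  (∀ i : Fin n, ∑ A ∈ univ.powerset.filter (fun A => i ∈ A), q i A = 1)

/-- Global score `W(q) = ∑_{∅ ≠ A ⊆ N} f^w(q^A)`. -/
def score (n : ℕ) (w : Finset (Fin n) → ℝ) (q : Fin n → Finset (Fin n) → ℝ) : ℝ :=
  ∑ A ∈ univ.powerset.filter (fun A : Finset (Fin n) => A ≠ ∅),
    mle n w (fun i => q i A)

/-- `P` is a partition of `N = Fin n`. -/
def IsPartition (n : ℕ) (P : Finset (Finset (Fin n))) : Prop :=
  ∅ ∉ P ∧ (∀ A ∈ P, ∀ B ∈ P, A ≠ B → Disjoint A B) ∧ P.biUnion id = univ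

/-- The hard clustering associated with a partition `P`: `p_i^A = 1` for all
`A ∈ P` and `i ∈ A`. -/
def hardClustering (n : ℕ) (P : Finset (Finset (Fin n))) :
    Fin n → Finset (Fin n) → ℝ :=
  fun i A => if A ∈ P ∧ i ∈ A then 1 else 0

lemma sum_neg_one_pow {n : ℕ} (s : Finset (Fin n)) :
    ∑ t ∈ s.powerset, (-1 : ℝ) ^ t.card = if s = ∅ then 1 else 0 := by
  have h0 : ((-1 : ℝ) + 1) = 0 := by ring
  have h := Finset.prod_add (fun _ : Fin n => (-1 : ℝ)) (fun _ => 1) s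
  simp only [Finset.prod_const_one, mul_one, Finset.prod_const, h0] at h
  rw [← h]
  rcases eq_or_ne s ∅ with rfl | hs
  · simp
  · rw [if_neg hs, zero_pow]
    exact Finset.card_ne_zero.2 (Finset.nonempty_iff_ne_empty.2 hs)

lemma moebius_sum {n : ℕ} (w : Finset (Fin n) → ℝ) (S : Finset (Fin n)) :
    ∑ B ∈ S.powerset, moebiusInv n w B = w S := by
  unfold moebiusInv
  rw [Finset.sum_comm' (t' := S.powerset)
      (s' := fun C => S.powerset.filter (fun B => C ⊆ B))
      (fun B C => by
        simp only [Finset.mem_powerset, Finset.mem_filter]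
        constructor
        · rintro ⟨h1, h2⟩; exact ⟨⟨h1, h2⟩, h2.trans h1⟩
        · rintro ⟨⟨h1, h2⟩, _⟩; exact ⟨h1, h2⟩)]
  have inner : ∀ C ∈ S.powerset,
      (∑ B ∈ S.powerset.filter (fun B => C ⊆ B), (-1 : ℝ) ^ (B \ C).card * w C)
        = if C = S then w S else 0 := by
    intro C hC
    rw [Finset.mem_powerset] at hC
    have key : (∑ B ∈ S.powerset.filter (fun B => C ⊆ B), (-1 : ℝ) ^ (B \ C).card * w C)
        = (∑ D ∈ (S \ C).powerset, (-1 : ℝ) ^ D.card) * w C := by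
      rw [Finset.sum_mul]
      refine Finset.sum_nbij' (i := fun B => B \ C) (j := fun D => C ∪ D) ?_ ?_ ?_ ?_ ?_
      · intro B hB
        rw [Finset.mem_filter, Finset.mem_powerset] at hB
        exact Finset.mem_powerset.2 (Finset.sdiff_subset_sdiff hB.1 le_rfl)
      · intro D hD
        rw [Finset.mem_powerset] at hD
        rw [Finset.mem_filter, Finset.mem_powerset]
        exact ⟨Finset.union_subset hC (hD.trans Finset.sdiff_subset), Finset.subset_union_left⟩
      · intro B hB
        rw [Finset.mem_filter] at hB
        exact Finset.union_sdiff_of_subset hB.2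
      · intro D hD
        rw [Finset.mem_powerset] at hD
        exact Finset.union_sdiff_cancel_left
          (Finset.disjoint_left.2 fun x hxC hxD => (Finset.mem_sdiff.1 (hD hxD)).2 hxC)
      · intro B hB; rfl
    rw [key, sum_neg_one_pow]
    rcases eq_or_ne C S with rfl | hCS
    · simp
    · rw [if_neg hCS, if_neg, zero_mul]
      rw [Finset.sdiff_eq_empty_iff_subset]
      exact fun h => hCS (Finset.Subset.antisymm hC h)
  rw [Finset.sum_congr rfl inner, Finset.sum_ite_eq' S.powerset S (fun _ => w S),
    if_pos (Finset.mem_powerset.2 le_rfl)]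

lemma mle_indicator {n : ℕ} (w : Finset (Fin n) → ℝ) (S : Finset (Fin n)) :
    mle n w (fun i => if i ∈ S then (1 : ℝ) else 0) = w S := by
  unfold mle
  have h : ∀ B ∈ (univ : Finset (Fin n)).powerset,
      (∏ i ∈ B, if i ∈ S then (1 : ℝ) else 0) * moebiusInv n w B
        = if B ∈ S.powerset then moebiusInv n w B else 0 := by
    intro B _
    by_cases hBS : B ⊆ S
    · rw [Finset.prod_eq_one (fun i hi => if_pos (hBS hi)), one_mul,
        if_pos (Finset.mem_powerset.2 hBS)]
    · obtain ⟨i, hiB, hiS⟩ := Finset.not_subset.1 hBS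
      rw [Finset.prod_eq_zero hiB (show (if i ∈ S then (1:ℝ) else 0) = 0 from if_neg hiS), zero_mul,
        if_neg (fun hB => hBS (Finset.mem_powerset.1 hB))]
  rw [Finset.sum_congr rfl h, Finset.sum_ite_mem]
  rw [show (univ : Finset (Fin n)).powerset ∩ S.powerset = S.powerset by
    ext B; simp]
  exact moebius_sum w S

lemma mle_update {n : ℕ} (w : Finset (Fin n) → ℝ) (x : Fin n → ℝ) (i : Fin n) (t : ℝ) :
    mle n w (Function.update x i t)
      = (∑ B ∈ univ.powerset.filter (fun B => i ∉ B), (∏ j ∈ B, x j) * moebiusInv n w B)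
        + t * ∑ B ∈ univ.powerset.filter (fun B => i ∈ B),
            (∏ j ∈ B.erase i, x j) * moebiusInv n w B := by
  unfold mle
  rw [← Finset.sum_filter_add_sum_filter_not (univ : Finset (Fin n)).powerset
      (fun B => i ∈ B), add_comm]
  congr 1
  · refine Finset.sum_congr rfl fun B hB => ?_
    rw [Finset.mem_filter] at hB
    congr 1
    refine Finset.prod_congr rfl fun j hj => ?_
    exact Function.update_of_ne (fun h : j = i => hB.2 (by rwa [h] at hj)) _ _
  · rw [Finset.mul_sum]
    refine Finset.sum_congr rfl fun B hB => ?_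
    rw [Finset.mem_filter] at hB
    rw [Finset.prod_update_of_mem hB.2, Finset.erase_eq]
    ring

lemma update_point {n : ℕ} (q : Fin n → Finset (Fin n) → ℝ) (i : Fin n)
    (r : Finset (Fin n) → ℝ) (A : Finset (Fin n)) :
    (fun j => Function.update q i r j A) = Function.update (fun j => q j A) i (r A) := by
  funext j
  rcases eq_or_ne j i with rfl | h
  · simp
  · simp [Function.update_of_ne h]

lemma score_decomp {n : ℕ} (w : Finset (Fin n) → ℝ) (i : Fin n)
    (q : Fin n → Finset (Fin n) → ℝ) (hq : IsMembership n q) :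
    score n w q = ∑ A₀ ∈ univ.powerset.filter (fun A => i ∈ A),
      q i A₀ * score n w (Function.update q i (fun A => if A = A₀ then (1 : ℝ) else 0)) := by
  classical
  set sNE := (univ : Finset (Fin n)).powerset.filter (fun A : Finset (Fin n) => A ≠ ∅) with hsNE
  set sI := (univ : Finset (Fin n)).powerset.filter (fun A : Finset (Fin n) => i ∈ A) with hsI
  set C : Finset (Fin n) → ℝ := fun A =>
    ∑ B ∈ univ.powerset.filter (fun B => i ∉ B), (∏ j ∈ B, q j A) * moebiusInv n w B with hC
  set D : Finset (Fin n) → ℝ := fun A =>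
    ∑ B ∈ univ.powerset.filter (fun B => i ∈ B),
      (∏ j ∈ B.erase i, q j A) * moebiusInv n w B with hD
  have hpt0 : ∀ A : Finset (Fin n), mle n w (fun j => q j A) = C A + q i A * D A := by
    intro A
    have := mle_update w (fun j => q j A) i (q i A)
    rw [show Function.update (fun j => q j A) i (q i A) = fun j => q j A from
      Function.update_eq_self i _] at this
    exact this
  have hLHS : score n w q = (∑ A ∈ sNE, C A) + ∑ A ∈ sNE, q i A * D A := by
    unfold score
    rw [← Finset.sum_add_distrib]
    exact Finset.sum_congr rfl fun A _ => hpt0 A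
  have hsub : sI ⊆ sNE := by
    intro A hA
    rw [hsI, Finset.mem_filter] at hA
    rw [hsNE, Finset.mem_filter]
    exact ⟨hA.1, fun h => by simp [h] at hA⟩
  have hD0 : ∑ A ∈ sNE, q i A * D A = ∑ A ∈ sI, q i A * D A := by
    refine (Finset.sum_subset hsub fun A hA hA' => ?_).symm
    have : i ∉ A := by
      rw [hsI, Finset.mem_filter] at hA'
      rw [hsNE, Finset.mem_filter] at hA
      exact fun h => hA' ⟨hA.1, h⟩
    rw [hq.2.1 i A this, zero_mul]
  have hRHSterm : ∀ A₀ ∈ sI,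
      score n w (Function.update q i (fun A => if A = A₀ then (1 : ℝ) else 0))
        = (∑ A ∈ sNE, C A) + D A₀ := by
    intro A₀ hA₀
    unfold score
    have h1 : ∀ A ∈ sNE,
        mle n w (fun j => Function.update q i (fun A => if A = A₀ then (1 : ℝ) else 0) j A)
          = C A + (if A = A₀ then (1 : ℝ) else 0) * D A := by
      intro A _
      rw [update_point, mle_update]
    rw [Finset.sum_congr rfl h1, Finset.sum_add_distrib]
    congr 1
    have h2 : ∀ A ∈ sNE, (if A = A₀ then (1 : ℝ) else 0) * D A
        = if A = A₀ then D A else 0 := by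
      intro A _; split <;> simp
    rw [Finset.sum_congr rfl h2, Finset.sum_ite_eq' sNE A₀ D, if_pos (hsub hA₀)]
  have hsum1 : ∑ A ∈ sI, q i A = 1 := hq.2.2 i
  calc score n w q = (∑ A ∈ sNE, C A) + ∑ A ∈ sI, q i A * D A := by rw [hLHS, hD0]
    _ = (∑ A₀ ∈ sI, q i A₀) * (∑ A ∈ sNE, C A) + ∑ A₀ ∈ sI, q i A₀ * D A₀ := by
        rw [hsum1, one_mul]
    _ = ∑ A₀ ∈ sI, (q i A₀ * (∑ A ∈ sNE, C A) + q i A₀ * D A₀) := by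
        rw [Finset.sum_add_distrib, Finset.sum_mul]
    _ = ∑ A₀ ∈ sI, q i A₀ *
          score n w (Function.update q i (fun A => if A = A₀ then (1 : ℝ) else 0)) := by
        refine Finset.sum_congr rfl fun A₀ hA₀ => ?_
        rw [hRHSterm A₀ hA₀]
        ring

lemma score_le_of_vertex_le {n : ℕ} (w : Finset (Fin n) → ℝ) (c : ℝ)
    (hvert : ∀ a : Fin n → Finset (Fin n), (∀ i, i ∈ a i) →
      score n w (fun i A => if A = a i then (1 : ℝ) else 0) ≤ c) :
    ∀ q, IsMembership n q → score n w q ≤ c := by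
  classical
  suffices H : ∀ S : Finset (Fin n), ∀ q, IsMembership n q →
      (∀ i, i ∉ S → ∃ A₀, i ∈ A₀ ∧ ∀ A, q i A = if A = A₀ then (1 : ℝ) else 0) →
      score n w q ≤ c by
    intro q hq
    exact H univ q hq (fun i hi => absurd (mem_univ i) hi)
  intro S
  induction S using Finset.induction_on with
  | empty =>
    intro q hq hvq
    choose a ha hqa using fun i => hvq i (Finset.notMem_empty i)
    have hqeq : q = fun i A => if A = a i then (1 : ℝ) else 0 := by
      funext i A; exact hqa i A
    rw [hqeq]
    exact hvert a ha
  | @insert i S hiS ih =>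
    intro q hq hvq
    rw [score_decomp w i q hq]
    have hle : ∀ A₀ ∈ (univ : Finset (Fin n)).powerset.filter (fun A => i ∈ A),
        q i A₀ * score n w (Function.update q i (fun A => if A = A₀ then (1 : ℝ) else 0))
          ≤ q i A₀ * c := by
      intro A₀ hA₀
      rw [Finset.mem_filter] at hA₀
      refine mul_le_mul_of_nonneg_left ?_ (hq.1 i A₀)
      set q' := Function.update q i (fun A => if A = A₀ then (1 : ℝ) else 0) with hq'
      have hq'mem : IsMembership n q' := by
        refine ⟨fun j A => ?_, fun j A hjA => ?_, fun j => ?_⟩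
        · rcases eq_or_ne j i with rfl | h
          · rw [hq', Function.update_self]; split <;> norm_num
          · rw [hq', Function.update_of_ne h]; exact hq.1 j A
        · rcases eq_or_ne j i with rfl | h
          · rw [hq', Function.update_self]
            refine if_neg fun hAA => hjA (by rw [hAA]; exact hA₀.2)
          · rw [hq', Function.update_of_ne h]; exact hq.2.1 j A hjA
        · rcases eq_or_ne j i with rfl | h
          · simp only [hq', Function.update_self]
            rw [Finset.sum_ite_eq' _ A₀ (fun _ => (1 : ℝ)),
              if_pos (Finset.mem_filter.2 ⟨hA₀.1, hA₀.2⟩)]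
          · simp only [hq', Function.update_of_ne h]; exact hq.2.2 j
      refine ih q' hq'mem fun j hjS => ?_
      rcases eq_or_ne j i with rfl | h
      · exact ⟨A₀, hA₀.2, fun A => by rw [hq', Function.update_self]⟩
      · obtain ⟨A₁, hA₁, hA₁'⟩ := hvq j (by simp [h, hjS])
        exact ⟨A₁, hA₁, fun A => by rw [hq', Function.update_of_ne h]; exact hA₁' A⟩
    calc ∑ A₀ ∈ (univ : Finset (Fin n)).powerset.filter (fun A => i ∈ A),
          q i A₀ * score n w (Function.update q i (fun A => if A = A₀ then (1 : ℝ) else 0))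
        ≤ ∑ A₀ ∈ (univ : Finset (Fin n)).powerset.filter (fun A => i ∈ A), q i A₀ * c :=
          Finset.sum_le_sum hle
      _ = c := by rw [← Finset.sum_mul, hq.2.2 i, one_mul]

lemma vertex_score {n : ℕ} (w : Finset (Fin n) → ℝ) (hw0 : w ∅ = 0)
    (a : Fin n → Finset (Fin n)) (ha : ∀ i, i ∈ a i) :
    ∃ P : Finset (Finset (Fin n)), IsPartition n P ∧
      score n w (fun i A => if A = a i then (1 : ℝ) else 0) = ∑ A ∈ P, w A := by
  classical
  set F : Finset (Fin n) → Finset (Fin n) := fun A => univ.filter (fun j => a j = A) with hF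
  set P : Finset (Finset (Fin n)) := univ.image (fun i => F (a i)) with hP
  have hmemF : ∀ j A, j ∈ F A ↔ a j = A := by intro j A; simp [hF]
  have hiFa : ∀ i, i ∈ F (a i) := fun i => (hmemF i (a i)).2 rfl
  refine ⟨P, ⟨?_, ?_, ?_⟩, ?_⟩
  · intro hemp
    rw [hP, Finset.mem_image] at hemp
    obtain ⟨i, _, hi⟩ := hemp
    exact Finset.notMem_empty i (hi ▸ hiFa i)
  · intro A hA B hB hAB
    rw [hP, Finset.mem_image] at hA hB
    obtain ⟨i, _, rfl⟩ := hA
    obtain ⟨i', _, rfl⟩ := hB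
    refine Finset.disjoint_left.2 fun j hj1 hj2 => ?_
    rw [hmemF] at hj1 hj2
    exact hAB (by rw [← hj1, ← hj2])
  · ext j
    simp only [Finset.mem_biUnion, Finset.mem_univ, iff_true, id]
    exact ⟨F (a j), Finset.mem_image.2 ⟨j, Finset.mem_univ j, rfl⟩, hiFa j⟩
  · unfold score
    have hptA : ∀ A : Finset (Fin n),
        mle n w (fun j => if A = a j then (1 : ℝ) else 0) = w (F A) := by
      intro A
      rw [← mle_indicator w (F A)]
      congr 1
      funext j
      by_cases h : a j = A
      · rw [if_pos ((hmemF j A).2 h), if_pos h.symm]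
      · rw [if_neg (fun g : A = a j => h g.symm), if_neg (fun g => h ((hmemF j A).1 g))]
    rw [Finset.sum_congr rfl (fun A _ => hptA A)]
    set s2 := (univ : Finset (Fin n)).powerset.filter (fun A => (F A).Nonempty) with hs2
    have hsub : s2 ⊆ (univ : Finset (Fin n)).powerset.filter
        (fun A : Finset (Fin n) => A ≠ ∅) := by
      intro A hA
      rw [hs2, Finset.mem_filter] at hA
      obtain ⟨j, hj⟩ := hA.2
      rw [hmemF] at hj
      refine Finset.mem_filter.2 ⟨hA.1, fun h => ?_⟩
      exact Finset.notMem_empty j (h ▸ hj ▸ ha j)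
    rw [← Finset.sum_subset hsub (fun A hA hA2 => ?_)]
    · refine Finset.sum_bij (fun A _ => F A) ?_ ?_ ?_ ?_
      · intro A hA
        rw [hs2, Finset.mem_filter] at hA
        obtain ⟨j, hj⟩ := hA.2
        rw [hmemF] at hj
        exact Finset.mem_image.2 ⟨j, Finset.mem_univ j, by rw [hj]⟩
      · intro A1 hA1 A2 hA2 hFF
        rw [hs2, Finset.mem_filter] at hA1
        obtain ⟨j, hj⟩ := hA1.2
        have hFF' : F A1 = F A2 := hFF
        have hj2 : j ∈ F A2 := hFF' ▸ hj
        rw [hmemF] at hj hj2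
        rw [← hj, hj2]
      · intro B hB
        rw [hP, Finset.mem_image] at hB
        obtain ⟨i, _, rfl⟩ := hB
        exact ⟨a i, Finset.mem_filter.2 ⟨Finset.mem_powerset.2 (Finset.subset_univ _),
          ⟨i, hiFa i⟩⟩, rfl⟩
      · intro A hA; rfl
    · have : F A = ∅ := by
        rw [hs2, Finset.mem_filter] at hA2
        by_contra h
        exact hA2 ⟨(Finset.mem_filter.1 hA).1, Finset.nonempty_iff_ne_empty.2 h⟩
      rw [this, hw0]

lemma hard_mem {n : ℕ} (P : Finset (Finset (Fin n))) (hP : IsPartition n P) :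
    IsMembership n (hardClustering n P) := by
  classical
  refine ⟨fun i A => ?_, fun i A hiA => ?_, fun i => ?_⟩
  · unfold hardClustering; split <;> norm_num
  · unfold hardClustering
    exact if_neg fun h => hiA h.2
  · obtain ⟨A₀, hA₀P, hiA₀⟩ : ∃ A₀ ∈ P, i ∈ A₀ := by
      have : i ∈ P.biUnion id := hP.2.2 ▸ Finset.mem_univ i
      simpa [Finset.mem_biUnion] using this
    rw [Finset.sum_eq_single_of_mem A₀
      (Finset.mem_filter.2 ⟨Finset.mem_powerset.2 (Finset.subset_univ _), hiA₀⟩)]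
    · exact if_pos ⟨hA₀P, hiA₀⟩
    · intro A hA hAne
      unfold hardClustering
      refine if_neg fun h => ?_
      exact Finset.disjoint_left.1 (hP.2.1 A h.1 A₀ hA₀P hAne) h.2 hiA₀

lemma hard_score {n : ℕ} (w : Finset (Fin n) → ℝ) (hw0 : w ∅ = 0)
    (P : Finset (Finset (Fin n))) (hP : IsPartition n P) :
    score n w (hardClustering n P) = ∑ A ∈ P, w A := by
  classical
  unfold score
  have hpt : ∀ A : Finset (Fin n), mle n w (fun i => hardClustering n P i A)
      = if A ∈ P then w A else 0 := by
    intro A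
    by_cases hA : A ∈ P
    · rw [if_pos hA, ← mle_indicator w A]
      congr 1
      funext i
      unfold hardClustering
      by_cases hiA : i ∈ A <;> simp [hA, hiA]
    · rw [if_neg hA, ← hw0, ← mle_indicator w ∅]
      congr 1
      funext i
      unfold hardClustering
      simp [hA]
  rw [Finset.sum_congr rfl (fun A _ => hpt A), ← Finset.sum_filter]
  congr 1
  ext A
  simp only [Finset.mem_filter, Finset.mem_powerset]
  constructor
  · rintro ⟨_, h⟩; exact h
  · intro h
    exact ⟨⟨Finset.subset_univ _, fun he => hP.1 (he ▸ h)⟩, h⟩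

/-- for every set function `w` with `w(∅)=0` there is a partition
`P` of `N` whose associated hard clustering `p ∈ Δ_N` satisfies
`W(p) = ∑_{A∈P} w(A)` and `W(p) ≥ W(q)` for all `q ∈ Δ_N`. -/
theorem hard_clustering_maximizes (n : ℕ) (w : Finset (Fin n) → ℝ)
    (hw0 : w ∅ = 0) :
    ∃ P : Finset (Finset (Fin n)), IsPartition n P ∧
      IsMembership n (hardClustering n P) ∧
      score n w (hardClustering n P) = ∑ A ∈ P, w A ∧
      ∀ q : Fin n → Finset (Fin n) → ℝ, IsMembership n q →
        score n w q ≤ score n w (hardClustering n P) := by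
  classical
  -- the singleton partition shows the set of partitions is nonempty
  have hsing : IsPartition n (univ.image fun i : Fin n => ({i} : Finset (Fin n))) := by
    refine ⟨?_, ?_, ?_⟩
    · intro h
      rw [Finset.mem_image] at h
      obtain ⟨i, _, hi⟩ := h
      exact Finset.singleton_ne_empty i hi
    · intro A hA B hB hAB
      rw [Finset.mem_image] at hA hB
      obtain ⟨i, _, rfl⟩ := hA
      obtain ⟨j, _, rfl⟩ := hB
      rw [Finset.disjoint_singleton]
      exact fun h => hAB (by rw [h])
    · ext j
      simp only [Finset.mem_biUnion, Finset.mem_univ, iff_true, id]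
      exact ⟨{j}, Finset.mem_image.2 ⟨j, Finset.mem_univ j, rfl⟩, Finset.mem_singleton_self j⟩
  obtain ⟨P, hPmem, hPmax⟩ := Finset.exists_max_image
    ((univ : Finset (Finset (Finset (Fin n)))).filter (fun P => IsPartition n P))
    (fun P => ∑ A ∈ P, w A)
    ⟨_, Finset.mem_filter.2 ⟨Finset.mem_univ _, hsing⟩⟩
  have hPpart : IsPartition n P := (Finset.mem_filter.1 hPmem).2
  refine ⟨P, hPpart, hard_mem P hPpart, hard_score w hw0 P hPpart, ?_⟩
  intro q hq
  rw [hard_score w hw0 P hPpart]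
  refine score_le_of_vertex_le w _ (fun a ha => ?_) q hq
  obtain ⟨Pa, hPa, hPascore⟩ := vertex_score w hw0 a ha
  rw [hPascore]
  exact hPmax Pa (Finset.mem_filter.2 ⟨Finset.mem_univ _, hPa⟩)
end

section
/- Let P be a partition of N, p ∈ Δ_N the associated hard clustering (p_i^A = 1 for all A ∈ P, i ∈ A), and let i ∈ N lie in a block A ∈ P with |A| > 1. Then for every unilateral deviation q_i ∈ Δ_i of data point i, W(p) − W(q_i | p_{−i}) = (1 − q_i^A) · Σ_{B ⊆ A, i ∈ B, |B| > 1} μ^w(B). -/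
open Finset

-- Möbius inversion: ∑_{B ⊆ C} μ(B) = w C
lemma sum_moebius (n : ℕ) (w : Finset (Fin n) → ℝ) (C : Finset (Fin n)) :
    ∑ B ∈ C.powerset, moebiusInv n w B = w C := by
  unfold moebiusInv
  rw [Finset.sum_comm' (s' := fun D => C.powerset.filter (fun B => D ⊆ B))
      (t' := C.powerset) (h := ?_)]
  · have key : ∀ D ∈ C.powerset,
        ∑ B ∈ C.powerset.filter (fun B => D ⊆ B), (-1 : ℝ) ^ (B \ D).card * w D
        = (if D = C then 1 else 0) * w D := by
      intro D hD
      rw [mem_powerset] at hD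
      rw [← Finset.sum_mul]
      congr 1
      rw [Finset.sum_nbij' (i := fun B => B \ D) (j := fun E => D ∪ E)]
      · have : ∑ E ∈ (C \ D).powerset, (-1:ℝ) ^ E.card
            = ((∑ E ∈ (C \ D).powerset, (-1:ℤ) ^ E.card : ℤ) : ℝ) := by
          push_cast; rfl
        rw [this, Finset.sum_powerset_neg_one_pow_card]
        by_cases h : D = C
        · simp [h]
        · have : C \ D ≠ ∅ := by
            rw [Ne, sdiff_eq_empty_iff_subset]
            intro hCD
            exact h (subset_antisymm hD hCD)
          simp [h, this]
      · intro B hB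
        simp only [mem_filter, mem_powerset] at hB
        rw [mem_powerset]
        exact sdiff_subset_sdiff hB.1 Subset.rfl
      · intro E hE
        rw [mem_powerset] at hE
        simp only [mem_filter, mem_powerset]
        exact ⟨union_subset hD (hE.trans sdiff_subset), subset_union_left⟩
      · intro B hB
        simp only [mem_filter, mem_powerset] at hB
        exact union_sdiff_of_subset hB.2
      · intro E hE
        rw [mem_powerset] at hE
        rw [union_sdiff_cancel_left]
        exact disjoint_of_subset_right hE disjoint_sdiff
      · intro B hB; rfl
    rw [Finset.sum_congr rfl key]
    rw [Finset.sum_eq_single C (fun b _ hb => by simp [hb]) (fun h => absurd (mem_powerset_self C) h)]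
    simp
  · intro B D
    simp only [mem_powerset, mem_filter, mem_powerset]
    constructor
    · rintro ⟨h1, h2⟩; exact ⟨⟨h1, h2⟩, h2.trans h1⟩
    · rintro ⟨⟨h1, h2⟩, h3⟩; exact ⟨h1, h2⟩

lemma mle_mixed (n : ℕ) (w : Finset (Fin n) → ℝ) (i : Fin n) (C : Finset (Fin n))
    (hiC : i ∉ C) (t : ℝ) :
    mle n w (fun j => if j = i then t else if j ∈ C then 1 else 0)
      = (∑ B ∈ C.powerset, moebiusInv n w B)
        + t * ∑ B ∈ (insert i C).powerset.filter (fun B => i ∈ B), moebiusInv n w B := by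
  unfold mle
  have key : ∀ B ∈ (univ : Finset (Fin n)).powerset,
      (∏ j ∈ B, (if j = i then t else if j ∈ C then (1:ℝ) else 0)) * moebiusInv n w B
      = (if B ⊆ C then moebiusInv n w B else 0)
        + (if i ∈ B ∧ B ⊆ insert i C then t * moebiusInv n w B else 0) := by
    intro B _
    by_cases hiB : i ∈ B
    · have h1 : ¬ B ⊆ C := fun h => hiC (h hiB)
      rw [if_neg h1, zero_add, ← Finset.mul_prod_erase B _ hiB, if_pos (rfl : i = i)]
      have herase : ∀ j ∈ B.erase i, (if j = i then t else if j ∈ C then (1:ℝ) else 0)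
          = if j ∈ C then 1 else 0 := by
        intro j hj
        rw [if_neg (mem_erase.mp hj).1]
      rw [Finset.prod_congr rfl herase]
      by_cases h2 : B ⊆ insert i C
      · have h3 : B.erase i ⊆ C := by
          intro j hj
          rcases mem_insert.mp (h2 (mem_erase.mp hj).2) with h | h
          · exact absurd h (mem_erase.mp hj).1
          · exact h
        rw [Finset.prod_congr rfl (fun j hj => if_pos (h3 hj)), prod_const_one, mul_one,
          if_pos (show i ∈ B ∧ B ⊆ insert i C from ⟨hiB, h2⟩)]
      · have h3 : ¬ B.erase i ⊆ C := by
          intro h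
          exact h2 (fun j hj => by
            by_cases hji : j = i
            · exact hji ▸ mem_insert_self i C
            · exact mem_insert_of_mem (h (mem_erase.mpr ⟨hji, hj⟩)))
        obtain ⟨j, hjB, hjC⟩ := not_subset.mp h3
        rw [Finset.prod_eq_zero hjB (show (if j ∈ C then (1:ℝ) else 0) = 0 from if_neg hjC),
          if_neg (show ¬(i ∈ B ∧ B ⊆ insert i C) from fun h => h2 h.2)]
        ring
    · rw [if_neg (show ¬(i ∈ B ∧ B ⊆ insert i C) from fun h => hiB h.1), add_zero]
      have herase : ∀ j ∈ B, (if j = i then t else if j ∈ C then (1:ℝ) else 0)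
          = if j ∈ C then 1 else 0 := by
        intro j hj
        rw [if_neg (show ¬ j = i from fun h => hiB (h ▸ hj))]
      rw [Finset.prod_congr rfl herase]
      by_cases h2 : B ⊆ C
      · rw [Finset.prod_congr rfl (fun j hj => if_pos (h2 hj)), if_pos h2, prod_const_one,
          one_mul]
      · obtain ⟨j, hjB, hjC⟩ := not_subset.mp h2
        rw [Finset.prod_eq_zero hjB (show (if j ∈ C then (1:ℝ) else 0) = 0 from if_neg hjC),
          if_neg h2, zero_mul]
  have e1 : (univ.powerset : Finset (Finset (Fin n))).filter (fun B => B ⊆ C) = C.powerset := by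
    ext B; simp
  have e2 : (univ.powerset : Finset (Finset (Fin n))).filter
      (fun B => i ∈ B ∧ B ⊆ insert i C)
      = (insert i C).powerset.filter (fun B => i ∈ B) := by
    ext B; simp [and_comm]
  rw [Finset.sum_congr rfl key, Finset.sum_add_distrib, ← Finset.sum_filter, ← Finset.sum_filter,
    e1, e2, ← Finset.mul_sum]

/-- let `p` be the hard clustering of a partition `P`, and let
`i ∈ A ∈ P` with `|A| > 1`. For every unilateral deviation `q_i ∈ Δ_i` of `i`,
`W(p) − W(q_i | p_{−i}) = (1 − q_i^A) · ∑_{B ⊆ A, i ∈ B, |B| > 1} μ^w(B)`. -/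
theorem deviation_from_hard_clustering (n : ℕ) (w : Finset (Fin n) → ℝ)
    (hw0 : w ∅ = 0)
    (P : Finset (Finset (Fin n))) (hP : IsPartition n P)
    (A : Finset (Fin n)) (hAP : A ∈ P) (i : Fin n) (hiA : i ∈ A)
    (hcard : 1 < A.card)
    (qi : Finset (Fin n) → ℝ)
    (hqi0 : ∀ B : Finset (Fin n), 0 ≤ qi B)
    (hqiz : ∀ B : Finset (Fin n), i ∉ B → qi B = 0)
    (hqi1 : ∑ B ∈ univ.powerset.filter (fun B => i ∈ B), qi B = 1) :
    score n w (hardClustering n P) -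
        score n w (fun j B => if j = i then qi B else hardClustering n P j B) =
      (1 - qi A) *
        ∑ B ∈ A.powerset.filter (fun B => i ∈ B ∧ 1 < B.card), moebiusInv n w B := by
  obtain ⟨hP1, hP2, hP3⟩ := hP
  have hmu0 : moebiusInv n w ∅ = 0 := by simp [moebiusInv, hw0]
  have huniq : ∀ C ∈ P, i ∈ C → C = A := by
    intro C hC hiC
    by_contra h
    exact (Finset.disjoint_left.mp (hP2 C hC A hAP h) hiC) hiA
  set S1 := (univ.powerset : Finset (Finset (Fin n))).filter (fun C => i ∈ C) with hS1
  set μi := moebiusInv n w {i} with hμi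
  set T := ∑ B ∈ A.powerset.filter (fun B => i ∈ B ∧ 1 < B.card), moebiusInv n w B with hT
  set M := ∑ B ∈ A.powerset.filter (fun B => i ∈ B), moebiusInv n w B with hM
  unfold score
  rw [← Finset.sum_sub_distrib]
  have hS1sub : S1 ⊆ (univ.powerset : Finset (Finset (Fin n))).filter (fun C => C ≠ ∅) := by
    intro C hC
    simp only [hS1, mem_filter, mem_powerset] at hC ⊢
    exact ⟨hC.1, ne_empty_of_mem hC.2⟩
  rw [← Finset.sum_subset hS1sub (by
    intro C hC hC1
    have hiC : i ∉ C := by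
      simp only [hS1, mem_filter, mem_powerset] at hC1
      simp only [mem_filter, mem_powerset] at hC
      exact fun h => hC1 ⟨hC.1, h⟩
    have : (fun j => if j = i then qi C else hardClustering n P j C)
        = fun j => hardClustering n P j C := by
      funext j
      by_cases hj : j = i
      · subst hj
        simp [hqiz C hiC, hardClustering, hiC]
      · simp [hj]
    rw [this, sub_self])]
  have hA_mem : A ∈ S1 := by simp [hS1, hiA]
  rw [← Finset.add_sum_erase _ _ hA_mem]
  -- the term at A
  have hpA : (fun j => hardClustering n P j A)
      = (fun j => if j = i then (1:ℝ) else if j ∈ A.erase i then 1 else 0) := by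
    funext j
    by_cases hj : j = i
    · subst hj; simp [hardClustering, hAP, hiA]
    · by_cases hjA : j ∈ A <;> simp [hardClustering, hAP, hj, hjA]
  have hqA : (fun j => if j = i then qi A else hardClustering n P j A)
      = (fun j => if j = i then qi A else if j ∈ A.erase i then 1 else 0) := by
    funext j
    by_cases hj : j = i
    · simp [hj]
    · by_cases hjA : j ∈ A <;> simp [hardClustering, hAP, hj, hjA]
  have hdA : mle n w (fun j => hardClustering n P j A)
      - mle n w (fun j => if j = i then qi A else hardClustering n P j A)
      = (1 - qi A) * M := by
    rw [hpA, hqA, mle_mixed n w i (A.erase i) (notMem_erase i A) 1,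
      mle_mixed n w i (A.erase i) (notMem_erase i A) (qi A), insert_erase hiA, ← hM]
    ring
  -- the terms away from A
  have hone : ∑ B ∈ (insert i (∅:Finset (Fin n))).powerset.filter (fun B => i ∈ B),
      moebiusInv n w B = μi := by
    have : (insert i (∅:Finset (Fin n))).powerset.filter (fun B => i ∈ B) = {{i}} := by
      ext B
      simp only [insert_empty_eq, mem_filter, mem_powerset, mem_singleton]
      constructor
      · rintro ⟨h1, h2⟩
        exact subset_antisymm h1 (singleton_subset_iff.mpr h2)
      · rintro rfl
        exact ⟨Subset.rfl, mem_singleton_self i⟩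
    rw [this, sum_singleton]
  have hdC : ∀ C ∈ S1.erase A,
      mle n w (fun j => hardClustering n P j C)
        - mle n w (fun j => if j = i then qi C else hardClustering n P j C)
      = -(qi C * μi) := by
    intro C hC
    obtain ⟨hCA, hCS1⟩ := mem_erase.mp hC
    have hiC : i ∈ C := by
      simp only [hS1, mem_filter, mem_powerset] at hCS1
      exact hCS1.2
    have hCP : C ∉ P := fun h => hCA (huniq C h hiC)
    have hpfun : (fun j => hardClustering n P j C)
        = (fun j => if j = i then (0:ℝ) else if j ∈ (∅ : Finset (Fin n)) then 1 else 0) := by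
      funext j
      by_cases hj : j = i <;> simp [hardClustering, hCP, hj]
    have hqfun : (fun j => if j = i then qi C else hardClustering n P j C)
        = (fun j => if j = i then qi C else if j ∈ (∅ : Finset (Fin n)) then 1 else 0) := by
      funext j
      by_cases hj : j = i <;> simp [hardClustering, hCP, hj]
    rw [hpfun, hqfun, mle_mixed n w i ∅ (notMem_empty i) 0,
      mle_mixed n w i ∅ (notMem_empty i) (qi C), hone]
    simp [hmu0]
  rw [Finset.sum_congr rfl hdC, hdA]
  have hsum_qi : ∑ C ∈ S1.erase A, qi C = 1 - qi A := by
    have h2 : qi A + ∑ C ∈ S1.erase A, qi C = ∑ C ∈ S1, qi C :=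
      Finset.add_sum_erase _ _ hA_mem
    rw [hS1] at *
    rw [hqi1] at h2
    linarith
  have hneg : ∑ C ∈ S1.erase A, -(qi C * μi) = -((1 - qi A) * μi) := by
    rw [← hsum_qi, Finset.sum_mul]
    exact Finset.sum_neg_distrib _
  rw [hneg]
  -- split M
  have hset : A.powerset.filter (fun B => i ∈ B)
      = insert {i} (A.powerset.filter (fun B => i ∈ B ∧ 1 < B.card)) := by
    ext B
    simp only [mem_insert, mem_filter, mem_powerset]
    constructor
    · rintro ⟨hBA, hiB⟩
      rcases lt_or_ge 1 B.card with h | h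
      · right; exact ⟨hBA, hiB, h⟩
      · left
        have h1 : B.card = 1 := le_antisymm h (Finset.one_le_card.mpr ⟨i, hiB⟩)
        obtain ⟨a, ha⟩ := Finset.card_eq_one.mp h1
        rw [ha] at hiB ⊢
        rw [mem_singleton] at hiB
        rw [hiB]
    · rintro (rfl | ⟨hBA, hiB, _⟩)
      · exact ⟨singleton_subset_iff.mpr hiA, mem_singleton_self i⟩
      · exact ⟨hBA, hiB⟩
  have hMsplit : M = μi + T := by
    rw [hM, hset, Finset.sum_insert (by simp)]
  rw [hMsplit]
  ring
end

section
/- Let v, w : 2^N → ℝ be set functions with v(∅) = w(∅) = 0. If Σ_{i∈N} w({i}) = Σ_{i∈N} v({i}) and μ^w(A) = μ^v(A) for every A ⊆ N with |A| > 1, then w and v additively separate the same partition function: Σ_{A∈P} w(A) = Σ_{A∈P} v(A) for every partition P of N. Consequently, if n ≥ 2, for every v there exist infinitely many set functions w ≠ v additively separating the same partition function as v. -/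
open Finset

lemma moebius_inversion (n : ℕ) (w : Finset (Fin n) → ℝ) (A : Finset (Fin n)) :
    ∑ B ∈ A.powerset, moebiusInv n w B = w A := by
  unfold moebiusInv
  rw [sum_comm' (s' := fun C => A.powerset.filter (fun B => C ⊆ B)) (t' := A.powerset)
    (fun B C => by
      simp only [mem_powerset, mem_filter]
      constructor
      · rintro ⟨h1, h2⟩; exact ⟨⟨h1, h2⟩, h2.trans h1⟩
      · rintro ⟨⟨h1, h2⟩, _⟩; exact ⟨h1, h2⟩)]
  have key : ∀ C ∈ A.powerset,
      (∑ B ∈ A.powerset.filter (fun B => C ⊆ B), (-1:ℝ) ^ (B \ C).card * w C)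
      = (if C = A then 1 else 0) * w C := by
    intro C hC
    rw [mem_powerset] at hC
    rw [← sum_mul]
    congr 1
    have hb : ∑ B ∈ A.powerset.filter (fun B => C ⊆ B), (-1:ℝ) ^ (B \ C).card
        = ∑ D ∈ (A \ C).powerset, (-1:ℝ) ^ D.card := by
      apply sum_nbij' (i := fun B => B \ C) (j := fun D => C ∪ D)
      · intro B hB
        rw [mem_filter, mem_powerset] at hB
        rw [mem_powerset]
        exact sdiff_le_sdiff hB.1 le_rfl
      · intro D hD
        rw [mem_powerset] at hD
        rw [mem_filter, mem_powerset]
        refine ⟨union_subset hC (hD.trans (sdiff_subset)), subset_union_left⟩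
      · intro B hB
        rw [mem_filter] at hB
        exact union_sdiff_of_subset hB.2
      · intro D hD
        rw [mem_powerset] at hD
        have : Disjoint C D := disjoint_sdiff.mono_right hD
        rw [union_sdiff_cancel_left this]
      · intro B hB; rfl
    rw [hb]
    have := @Finset.sum_powerset_neg_one_pow_card (Fin n) _ (A \ C)
    have hcast : ∑ D ∈ (A \ C).powerset, (-1:ℝ) ^ D.card
        = ((∑ D ∈ (A \ C).powerset, (-1:ℤ) ^ D.card : ℤ) : ℝ) := by
      push_cast; rfl
    rw [hcast, this]
    by_cases h : C = A
    · simp [h]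
    · have : A \ C ≠ ∅ := by
        rw [Ne, sdiff_eq_empty_iff_subset]
        intro hAC
        exact h (subset_antisymm hC hAC)
      simp [h, this]
  rw [sum_congr rfl key]
  simp [ite_mul, sum_ite_eq' A.powerset A w]
lemma moebiusInv_empty (n : ℕ) (w : Finset (Fin n) → ℝ) : moebiusInv n w ∅ = w ∅ := by
  simp [moebiusInv]

lemma moebiusInv_singleton (n : ℕ) (w : Finset (Fin n) → ℝ) (hw : w ∅ = 0) (i : Fin n) :
    moebiusInv n w {i} = w {i} := by
  have : ({i} : Finset (Fin n)).powerset = {∅, {i}} := by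
    ext B
    simp [Finset.subset_singleton_iff]
  simp [moebiusInv, this, hw]

lemma diff_eq_sum_singletons (n : ℕ) (v w : Finset (Fin n) → ℝ)
    (hv : v ∅ = 0) (hw : w ∅ = 0)
    (hmu : ∀ A : Finset (Fin n), 1 < A.card → moebiusInv n w A = moebiusInv n v A)
    (A : Finset (Fin n)) :
    w A - v A = ∑ i ∈ A, (w {i} - v {i}) := by
  have h1 : w A - v A = ∑ B ∈ A.powerset, (moebiusInv n w B - moebiusInv n v B) := by
    rw [sum_sub_distrib, moebius_inversion, moebius_inversion]
  rw [h1]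
  have h2 : ∑ B ∈ A.powerset, (moebiusInv n w B - moebiusInv n v B)
      = ∑ B ∈ A.powerset.filter (fun B => B.card = 1),
          (moebiusInv n w B - moebiusInv n v B) := by
    symm
    apply sum_filter_of_ne
    intro B hB hne
    by_contra hcard
    rcases Nat.lt_trichotomy B.card 1 with h | h | h
    · interval_cases hB' : B.card
      · rw [card_eq_zero] at hB'
        subst hB'
        rw [moebiusInv_empty, moebiusInv_empty, hv, hw] at hne
        simp at hne
    · exact hcard h
    · rw [hmu B h] at hne; simp at hne
  rw [h2]
  have h3 : A.powerset.filter (fun B => B.card = 1) = A.image (fun i => {i}) := by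
    ext B
    simp only [mem_filter, mem_powerset, mem_image, card_eq_one]
    constructor
    · rintro ⟨hBA, i, rfl⟩
      exact ⟨i, hBA (mem_singleton_self i), rfl⟩
    · rintro ⟨i, hi, rfl⟩
      exact ⟨singleton_subset_iff.2 hi, i, rfl⟩
  rw [h3, sum_image (by intro x _ y _ h; exact singleton_injective h)]
  apply sum_congr rfl
  intro i _
  rw [moebiusInv_singleton n w hw, moebiusInv_singleton n v hv]

lemma partition_indicator_sum (n : ℕ) (P : Finset (Finset (Fin n))) (hP : IsPartition n P)
    (i : Fin n) : ∑ A ∈ P, (if i ∈ A then (1:ℝ) else 0) = 1 := by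
  obtain ⟨-, hdisj, hunion⟩ := hP
  have : i ∈ P.biUnion id := hunion ▸ mem_univ i
  rw [mem_biUnion] at this
  obtain ⟨A0, hA0, hiA0⟩ := this
  simp only [id] at hiA0
  rw [sum_eq_single_of_mem A0 hA0]
  · exact if_pos hiA0
  · intro B hB hBA
    rw [if_neg]
    intro hiB
    exact (disjoint_left.1 (hdisj B hB A0 hA0 hBA)) hiB hiA0

/-- if `v(∅) = w(∅) = 0`, `∑_i w({i}) = ∑_i v({i})` and
`μ^w(A) = μ^v(A)` for every `A` with `|A| > 1`, then `w` and `v` additively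
separate the same partition function: `∑_{A∈P} w(A) = ∑_{A∈P} v(A)` for every
partition `P` of `N`.  Consequently, if `n ≥ 2`, for every `v` there are
infinitely many set functions `w ≠ v` additively separating the same partition
function as `v`. -/
theorem same_separation_and_continuum (n : ℕ) :
    (∀ v w : Finset (Fin n) → ℝ, v ∅ = 0 → w ∅ = 0 →
      (∑ i : Fin n, w {i}) = (∑ i : Fin n, v {i}) →
      (∀ A : Finset (Fin n), 1 < A.card → moebiusInv n w A = moebiusInv n v A) →
      ∀ P : Finset (Finset (Fin n)), IsPartition n P →
        ∑ A ∈ P, w A = ∑ A ∈ P, v A) ∧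
    (2 ≤ n → ∀ v : Finset (Fin n) → ℝ, v ∅ = 0 →
      {w : Finset (Fin n) → ℝ | w ∅ = 0 ∧ w ≠ v ∧
        ∀ P : Finset (Finset (Fin n)), IsPartition n P →
          ∑ A ∈ P, w A = ∑ A ∈ P, v A}.Infinite) := by
  constructor
  · intro v w hv hw hsingle hmu P hP
    have key : ∀ A : Finset (Fin n), w A - v A = ∑ i ∈ A, (w {i} - v {i}) :=
      diff_eq_sum_singletons n v w hv hw hmu
    have h1 : ∑ A ∈ P, (w A - v A) = ∑ A ∈ P, ∑ i ∈ A, (w {i} - v {i}) :=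
      sum_congr rfl fun A _ => key A
    have h2 : ∑ A ∈ P, ∑ i ∈ (id A), (w {i} - v {i}) = ∑ i ∈ P.biUnion id, (w {i} - v {i}) :=
      (sum_biUnion (fun A hA B hB hAB => hP.2.1 A hA B hB hAB)).symm
    have h3 : ∑ A ∈ P, (w A - v A) = 0 := by
      rw [h1]
      simp only [id] at h2
      rw [h2, hP.2.2, sum_sub_distrib, hsingle, sub_self]
    have := sum_sub_distrib (s := P) (f := w) (g := v) ▸ h3
    linarith [this]
  · intro hn v hv
    have h0 : (0 : ℕ) < n := by omega
    have h1 : (1 : ℕ) < n := by omega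
    set e0 : Fin n := ⟨0, h0⟩
    set e1 : Fin n := ⟨1, h1⟩
    have hne01 : e0 ≠ e1 := by simp [e0, e1, Fin.ext_iff]
    set g : Finset (Fin n) → ℝ :=
      fun A => (if e0 ∈ A then (1:ℝ) else 0) - (if e1 ∈ A then (1:ℝ) else 0) with hg
    have hF : (e1 = e0) ↔ False := ⟨fun h => hne01 h.symm, False.elim⟩
    apply Set.infinite_of_injective_forall_mem
      (f := fun k : ℕ => fun A => v A + (k + 1 : ℝ) * g A)
    case hi =>
      intro a b hab
      have h := congrFun hab {e0}
      simp only [hg, mem_singleton, hF, if_true, if_false, eq_self_iff_true,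
        sub_zero, mul_one, add_right_inj, add_left_inj] at h
      exact_mod_cast h
    case hf =>
      intro k
      refine ⟨by simp [hg, hv], ?_, ?_⟩
      · intro h
        have h2 := congrFun h {e0}
        simp only [hg, mem_singleton, hF, if_true, if_false, eq_self_iff_true,
          sub_zero, mul_one, add_eq_left] at h2
        have : (0:ℝ) < (k:ℝ) + 1 := by positivity
        linarith
      · intro P hP
        have hge0 := partition_indicator_sum n P hP e0
        have hge1 := partition_indicator_sum n P hP e1
        have hgz : ∑ A ∈ P, g A = 0 := by
          simp only [hg, sum_sub_distrib, hge0, hge1, sub_self]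
        rw [sum_add_distrib, ← mul_sum, hgz, mul_zero, add_zero]
end
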